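/- The maximum over all unit vectors ψ ∈ ℂ² ⊗ ℂ² of A₂(|ψ⟩⟨ψ|, |ψ⟩⟨ψ|) · B_{2,H}(|ψ⟩⟨ψ|, |ψ⟩⟨ψ|) equals (18/5)² = 324/25, and it is attained exactly by product pure states (e.g., ψ = |00⟩); for the Bell state (|00⟩+|11⟩)/√2 the value is 7 · 29/20 = 203/20 < 324/25. -/

import Mathlib

open Matrix BigOperators
open scoped ComplexOrder

noncomputable section

abbrev QIdx (n : ℕ) := Fin n → Fin 2

def IsDensity {ι : Type*} [Fintype ι] [DecidableEq ι] (ρ : Matrix ι ι ℂ) : Prop :=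
  ρ.PosSemidef ∧ ρ.trace = 1

/-- The operator on `(ℂ²)^{⊗k}` permuting the `k` tensor factors according to `π`. -/
def permOp {k : ℕ} (π : Equiv.Perm (Fin k)) : Matrix (Fin k → Fin 2) (Fin k → Fin 2) ℂ :=
  fun a b => if ∀ i, b i = a (π i) then 1 else 0

def pauliX : Matrix (Fin 2) (Fin 2) ℂ := !![0, 1; 1, 0]
def pauliY : Matrix (Fin 2) (Fin 2) ℂ := !![0, -Complex.I; Complex.I, 0]
def pauliZ : Matrix (Fin 2) (Fin 2) ℂ := !![1, 0; 0, -1]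

/-- `P^{⊗k}` on `(ℂ²)^{⊗k}`. -/
def pauliPow (k : ℕ) (P : Matrix (Fin 2) (Fin 2) ℂ) :
    Matrix (Fin k → Fin 2) (Fin k → Fin 2) ℂ :=
  fun a b => ∏ i, P (a i) (b i)

/-- The single-qubit Clifford fourth-moment operator `R_{4,Cl}` on `(ℂ²)^{⊗4}`. -/
def R4Cl : Matrix (Fin 4 → Fin 2) (Fin 4 → Fin 2) ℂ :=
  -1 + ((1 : ℂ)/2) • (permOp (Equiv.swap 0 1) + permOp (Equiv.swap 2 3))
    + ((3 : ℂ)/4) • (1 + pauliPow 4 pauliX + pauliPow 4 pauliY + pauliPow 4 pauliZ)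

/-- The single-qubit Haar fourth-moment operator `R_{4,H}` on `(ℂ²)^{⊗4}`. -/
def R4H : Matrix (Fin 4 → Fin 2) (Fin 4 → Fin 2) ℂ :=
  ((1 : ℂ)/5) • (1 + permOp (Equiv.swap 0 1) + permOp (Equiv.swap 2 3))
  + ((3 : ℂ)/5) • (permOp (Equiv.swap 0 1 * Equiv.swap 2 3)
      + permOp (Equiv.swap 0 2 * Equiv.swap 1 3)
      + permOp (Equiv.swap 0 3 * Equiv.swap 1 2))
  - ((3 : ℂ)/10) • (permOp (Equiv.swap 0 2) + permOp (Equiv.swap 1 3)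
      + permOp (Equiv.swap 0 3) + permOp (Equiv.swap 1 2))

/-- Per-qubit `n`-fold tensor power of an operator on `(ℂ²)^{⊗k}` (k replicas),
acting on `k` copies of `(ℂ²)^{⊗n}`. -/
def repPow (n : ℕ) {k : ℕ} (R : Matrix (Fin k → Fin 2) (Fin k → Fin 2) ℂ) :
    Matrix (Fin k → QIdx n) (Fin k → QIdx n) ℂ :=
  fun a b => ∏ ℓ : Fin n, R (fun r => a r ℓ) (fun r => b r ℓ)

/-- The four-replica state `ρ ⊗ σ ⊗ ρ ⊗ σ`. -/
def rep4 {n : ℕ} (ρ σ : Matrix (QIdx n) (QIdx n) ℂ) :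
    Matrix (Fin 4 → QIdx n) (Fin 4 → QIdx n) ℂ :=
  fun a b => ρ (a 0) (b 0) * σ (a 1) (b 1) * ρ (a 2) (b 2) * σ (a 3) (b 3)

/-- The pure state `|ψ⟩⟨ψ|`. -/
def pureState {ι : Type*} (ψ : ι → ℂ) : Matrix ι ι ℂ :=
  fun a b => ψ a * star (ψ b)


/-- `ρ ⊗ σ` on `(ℂ²)^{⊗n} ⊗ (ℂ²)^{⊗n}`. -/
def kron2 {n : ℕ} (ρ σ : Matrix (QIdx n) (QIdx n) ℂ) :
    Matrix (QIdx n × QIdx n) (QIdx n × QIdx n) ℂ :=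
  fun p q => ρ p.1 q.1 * σ p.2 q.2

/-- The partial swap `F_S` on `(ℂ²)^{⊗n} ⊗ (ℂ²)^{⊗n}`. -/
def partialSwap {n : ℕ} (S : Finset (Fin n)) :
    Matrix (QIdx n × QIdx n) (QIdx n × QIdx n) ℂ :=
  fun p q => if (∀ ℓ, if ℓ ∈ S then q.1 ℓ = p.2 ℓ ∧ q.2 ℓ = p.1 ℓ
      else q.1 ℓ = p.1 ℓ ∧ q.2 ℓ = p.2 ℓ) then 1 else 0

/-- The second-moment coefficient `A_n(ρ,σ) = Σ_{S ⊆ [n]} 2^{n−|S|} tr[F_S(ρ⊗σ)]`. -/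
def An {n : ℕ} (ρ σ : Matrix (QIdx n) (QIdx n) ℂ) : ℂ :=
  ∑ S : Finset (Fin n), (2 : ℂ)^(n - S.card) * Matrix.trace (partialSwap S * kron2 ρ σ)

/-- The Haar fourth-moment coefficient `B_{n,H}(ρ,σ) = tr[R_{4,H}^{⊗n}(ρ⊗σ⊗ρ⊗σ)]`. -/
def BnH {n : ℕ} (ρ σ : Matrix (QIdx n) (QIdx n) ℂ) : ℂ :=
  Matrix.trace (repPow n R4H * rep4 ρ σ)

/-- The value `A₂(|ψ⟩⟨ψ|,|ψ⟩⟨ψ|) · B_{2,H}(|ψ⟩⟨ψ|,|ψ⟩⟨ψ|)` for a two-qubit vector. -/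
def AB2 (ψ : QIdx 2 → ℂ) : ℝ :=
  (An (pureState ψ) (pureState ψ) * BnH (pureState ψ) (pureState ψ)).re


/-- The two-qubit Bell state `(|00⟩ + |11⟩)/√2`. -/
def bellVec : QIdx 2 → ℂ := fun s => if s 0 = s 1 then 1 / (Real.sqrt 2 : ℂ) else 0

namespace Cert

def e2 : (Fin 2 → Fin 2) ≃ (Fin 2 × Fin 2) where
  toFun f := (f 0, f 1)
  invFun p := ![p.1, p.2]
  left_inv f := by funext i; fin_cases i <;> rfl
  right_inv p := rfl

def e4 : (Fin 4 → Fin 2) ≃ (Fin 2 × Fin 2 × Fin 2 × Fin 2) where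
  toFun f := (f 0, f 1, f 2, f 3)
  invFun p := ![p.1, p.2.1, p.2.2.1, p.2.2.2]
  left_inv f := by funext i; fin_cases i <;> rfl
  right_inv p := rfl

lemma sum_qidx2 (f : QIdx 2 → ℂ) :
    ∑ s : QIdx 2, f s = f ![0,0] + f ![0,1] + f ![1,0] + f ![1,1] := by
  rw [← Equiv.sum_comp e2.symm f]
  have hs : ∀ p, e2.symm p = ![p.1, p.2] := fun _ => rfl
  simp [Fintype.sum_prod_type, Fin.sum_univ_two, hs]
  ring

lemma sum_fun4 (h : Fin 4 → Fin 2 → ℂ) :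
    ∑ w : Fin 4 → Fin 2, ∏ r, h r (w r) = ∏ r, (h r 0 + h r 1) := by
  rw [← Equiv.sum_comp e4.symm (fun w => ∏ r, h r (w r))]
  have hs : ∀ p, e4.symm p = ![p.1, p.2.1, p.2.2.1, p.2.2.2] := fun _ => rfl
  simp [Fintype.sum_prod_type, Fin.sum_univ_two, Fin.prod_univ_four, hs]
  ring

lemma partialSwap_apply {n : ℕ} (S : Finset (Fin n)) (p q : QIdx n × QIdx n) :
    partialSwap S p q = if q = ((fun ℓ => if ℓ ∈ S then p.2 ℓ else p.1 ℓ),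
      (fun ℓ => if ℓ ∈ S then p.1 ℓ else p.2 ℓ)) then 1 else 0 := by
  unfold partialSwap
  congr 1
  rw [Prod.ext_iff]
  simp only [funext_iff, eq_iff_iff, ← forall_and]
  apply forall_congr'
  intro ℓ
  by_cases h : ℓ ∈ S <;> simp [h]

lemma trace_partialSwap (S : Finset (Fin 2)) (ρ σ : Matrix (QIdx 2) (QIdx 2) ℂ) :
    Matrix.trace (partialSwap S * kron2 ρ σ) =
      ∑ p : QIdx 2 × QIdx 2, kron2 ρ σ ((fun ℓ => if ℓ ∈ S then p.2 ℓ else p.1 ℓ),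
        (fun ℓ => if ℓ ∈ S then p.1 ℓ else p.2 ℓ)) p := by
  rw [Matrix.trace]
  simp only [Matrix.diag, Matrix.mul_apply, partialSwap_apply, ite_mul, one_mul, zero_mul]
  exact Finset.sum_congr rfl fun p _ => by rw [Finset.sum_ite_eq' _ _ _]; simp

lemma univ_finset_fin2 :
    (Finset.univ : Finset (Finset (Fin 2))) =
      insert ∅ (insert {0} (insert {1} {Finset.univ})) := by decide

lemma phi_empty (u v : QIdx 2) :
    ((fun ℓ => if ℓ ∈ (∅ : Finset (Fin 2)) then u ℓ else v ℓ) : QIdx 2) = v := by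
  funext ℓ; simp

lemma phi_zero (u v : QIdx 2) :
    ((fun ℓ => if ℓ ∈ ({0} : Finset (Fin 2)) then u ℓ else v ℓ) : QIdx 2) = ![u 0, v 1] := by
  funext ℓ; fin_cases ℓ <;> simp

lemma phi_one (u v : QIdx 2) :
    ((fun ℓ => if ℓ ∈ ({1} : Finset (Fin 2)) then u ℓ else v ℓ) : QIdx 2) = ![v 0, u 1] := by
  funext ℓ; fin_cases ℓ <;> simp

lemma phi_univ (u v : QIdx 2) :
    ((fun ℓ => if ℓ ∈ (Finset.univ : Finset (Fin 2)) then u ℓ else v ℓ) : QIdx 2) = u := by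
  funext ℓ; simp

lemma An_pure (ψ : QIdx 2 → ℂ) :
    An (pureState ψ) (pureState ψ) =
      9 * (ψ ![0,0] * star (ψ ![0,0]) + ψ ![0,1] * star (ψ ![0,1])
          + ψ ![1,0] * star (ψ ![1,0]) + ψ ![1,1] * star (ψ ![1,1]))^2
      - 8 * ((ψ ![0,0] * ψ ![1,1] - ψ ![0,1] * ψ ![1,0])
          * star (ψ ![0,0] * ψ ![1,1] - ψ ![0,1] * ψ ![1,0])) := by
  rw [An, univ_finset_fin2, Finset.sum_insert (by decide), Finset.sum_insert (by decide),
    Finset.sum_insert (by decide), Finset.sum_singleton]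
  simp only [trace_partialSwap, phi_empty, phi_zero, phi_one, phi_univ]
  simp only [Fintype.sum_prod_type, sum_qidx2, kron2, pureState, Matrix.cons_val_zero, Matrix.cons_val_one, Matrix.head_cons]
  simp only [Finset.card_empty, Finset.card_singleton, Finset.card_univ, Fintype.card_fin,
    Matrix.cons_val_zero, Matrix.cons_val_one, Matrix.head_cons, star_sub, star_mul']
  norm_num
  ring
lemma permOp_one {k : ℕ} : permOp (1 : Equiv.Perm (Fin k)) = (1 : Matrix (Fin k → Fin 2) (Fin k → Fin 2) ℂ) := by
  funext a b
  simp [permOp, Matrix.one_apply, funext_iff, eq_comm]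

def cc : Fin 10 → ℂ := ![1/5, 1/5, 1/5, 3/5, 3/5, 3/5, -(3/10), -(3/10), -(3/10), -(3/10)]

def ps : Fin 10 → Equiv.Perm (Fin 4) :=
  ![1, Equiv.swap 0 1, Equiv.swap 2 3, Equiv.swap 0 1 * Equiv.swap 2 3,
    Equiv.swap 0 2 * Equiv.swap 1 3, Equiv.swap 0 3 * Equiv.swap 1 2,
    Equiv.swap 0 2, Equiv.swap 1 3, Equiv.swap 0 3, Equiv.swap 1 2]

lemma R4H_apply (a b : Fin 4 → Fin 2) :
    R4H a b = ∑ i : Fin 10, cc i * permOp (ps i) a b := by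
  simp only [R4H, cc, ps, Fin.sum_univ_succ, Finset.univ_eq_empty, Finset.sum_empty,
    Matrix.cons_val_zero, Matrix.cons_val_one, Matrix.head_cons, Matrix.cons_val_succ,
    Matrix.add_apply, Matrix.sub_apply, Matrix.smul_apply, smul_eq_mul, ← permOp_one,
    Fin.sum_univ_zero]
  ring

lemma collapse (π π' : Equiv.Perm (Fin 4)) (x : Fin 4 → QIdx 2) (g : (Fin 4 → QIdx 2) → ℂ) :
    ∑ y : Fin 4 → QIdx 2, permOp π (fun r => x r 0) (fun r => y r 0) *
      permOp π' (fun r => x r 1) (fun r => y r 1) * g y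
    = g (fun r => ![x (π r) 0, x (π' r) 1]) := by
  rw [Finset.sum_eq_single (fun r => ![x (π r) 0, x (π' r) 1])]
  · simp [permOp]
  · intro y _ hy
    rcases Decidable.em (∀ i, y i 0 = x (π i) 0) with h0 | h0
    · rcases Decidable.em (∀ i, y i 1 = x (π' i) 1) with h1 | h1
      · exfalso
        apply hy
        funext r ℓ
        fin_cases ℓ
        · exact h0 r
        · exact h1 r
      · simp [permOp, h1]
    · simp [permOp, h0]
  · intro h; exact absurd (Finset.mem_univ _) h

lemma rep4_pure (ψ : QIdx 2 → ℂ) (a b : Fin 4 → QIdx 2) :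
    rep4 (pureState ψ) (pureState ψ) a b = ∏ r : Fin 4, (ψ (a r) * star (ψ (b r))) := by
  simp only [rep4, pureState, Fin.prod_univ_four]

def Km (ψ : QIdx 2 → ℂ) (i j : Fin 2) : ℂ := ∑ u : Fin 2, star (ψ ![u, i]) * ψ ![u, j]

def eX : ((Fin 4 → Fin 2) × (Fin 4 → Fin 2)) ≃ (Fin 4 → QIdx 2) where
  toFun p := fun r => ![p.1 r, p.2 r]
  invFun x := (fun r => x r 0, fun r => x r 1)
  left_inv p := by
    apply Prod.ext <;> funext r <;> rfl
  right_inv x := by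
    funext r ℓ; fin_cases ℓ <;> rfl

lemma W_eq (π π' : Equiv.Perm (Fin 4)) (ψ : QIdx 2 → ℂ) :
    ∑ x : Fin 4 → QIdx 2, ∏ r : Fin 4, (ψ ![x (π r) 0, x (π' r) 1] * star (ψ (x r)))
    = ∑ v : Fin 4 → Fin 2, ∏ r : Fin 4, Km ψ (v (π r)) (v (π' r)) := by
  rw [← Equiv.sum_comp eX
    (fun x => ∏ r : Fin 4, (ψ ![x (π r) 0, x (π' r) 1] * star (ψ (x r))))]
  simp only [eX, Equiv.coe_fn_mk, Matrix.cons_val_zero, Matrix.cons_val_one, Matrix.head_cons]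
  rw [Fintype.sum_prod_type, Finset.sum_comm]
  refine Finset.sum_congr rfl fun v _ => ?_
  rw [← Equiv.sum_comp (Equiv.arrowCongr π (Equiv.refl (Fin 2)))
    (fun u => ∏ r : Fin 4, (ψ ![u (π r), v (π' r)] * star (ψ ![u r, v r])))]
  simp only [Equiv.arrowCongr_apply, Function.comp, Equiv.refl_apply, Equiv.symm_apply_apply]
  have hsplit : ∀ w : Fin 4 → Fin 2,
      (∏ r : Fin 4, (ψ ![w r, v (π' r)] * star (ψ ![w (π.symm r), v r])))
      = ∏ r : Fin 4, (ψ ![w r, v (π' r)] * star (ψ ![w r, v (π r)])) := by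
    intro w
    rw [Finset.prod_mul_distrib, Finset.prod_mul_distrib]
    congr 1
    rw [← Equiv.prod_comp π (fun r => star (ψ ![w (π.symm r), v r]))]
    simp only [Equiv.symm_apply_apply]
  simp only [hsplit]
  rw [sum_fun4 (fun r c => ψ ![c, v (π' r)] * star (ψ ![c, v (π r)]))]
  refine Finset.prod_congr rfl fun r _ => ?_
  simp only [Km, Fin.sum_univ_two]
  ring
lemma sum_swap4 {α β γ δ : Type*} [Fintype α] [Fintype β] [Fintype γ] [Fintype δ]
    (F : α → β → γ → δ → ℂ) :
    ∑ x : α, ∑ y : β, ∑ i : γ, ∑ j : δ, F x y i j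
      = ∑ i : γ, ∑ j : δ, ∑ x : α, ∑ y : β, F x y i j := by
  calc ∑ x : α, ∑ y : β, ∑ i : γ, ∑ j : δ, F x y i j
      = ∑ x : α, ∑ i : γ, ∑ y : β, ∑ j : δ, F x y i j :=
        Finset.sum_congr rfl fun x _ => Finset.sum_comm
    _ = ∑ x : α, ∑ i : γ, ∑ j : δ, ∑ y : β, F x y i j :=
        Finset.sum_congr rfl fun x _ => Finset.sum_congr rfl fun i _ => Finset.sum_comm
    _ = ∑ i : γ, ∑ x : α, ∑ j : δ, ∑ y : β, F x y i j := Finset.sum_comm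
    _ = ∑ i : γ, ∑ j : δ, ∑ x : α, ∑ y : β, F x y i j :=
        Finset.sum_congr rfl fun i _ => Finset.sum_comm

lemma repPow_two (R : Matrix (Fin 4 → Fin 2) (Fin 4 → Fin 2) ℂ) (x y : Fin 4 → QIdx 2) :
    repPow 2 R x y = R (fun r => x r 0) (fun r => y r 0) * R (fun r => x r 1) (fun r => y r 1) := by
  simp [repPow, Fin.prod_univ_two]

lemma BnH_pure (ψ : QIdx 2 → ℂ) :
    BnH (pureState ψ) (pureState ψ) =
      ∑ i : Fin 10, ∑ j : Fin 10, cc i * cc j *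
        (∑ v : Fin 4 → Fin 2, ∏ r : Fin 4, Km ψ (v (ps i r)) (v (ps j r))) := by
  rw [BnH, Matrix.trace]
  simp only [Matrix.diag, Matrix.mul_apply]
  have step1 : ∀ x y : Fin 4 → QIdx 2,
      repPow 2 R4H x y * rep4 (pureState ψ) (pureState ψ) y x
      = ∑ i : Fin 10, ∑ j : Fin 10, cc i * cc j *
          (permOp (ps i) (fun r => x r 0) (fun r => y r 0) *
           permOp (ps j) (fun r => x r 1) (fun r => y r 1) *
           rep4 (pureState ψ) (pureState ψ) y x) := by
    intro x y
    rw [repPow_two, R4H_apply, R4H_apply, Finset.sum_mul_sum, Finset.sum_mul]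
    refine Finset.sum_congr rfl fun i _ => ?_
    rw [Finset.sum_mul]
    refine Finset.sum_congr rfl fun j _ => ?_
    ring
  simp only [step1]
  rw [sum_swap4]
  refine Finset.sum_congr rfl fun i _ => Finset.sum_congr rfl fun j _ => ?_
  simp only [← Finset.mul_sum]
  congr 1
  have hc : ∀ x : Fin 4 → QIdx 2,
      (∑ y : Fin 4 → QIdx 2,
        permOp (ps i) (fun r => x r 0) (fun r => y r 0) *
        permOp (ps j) (fun r => x r 1) (fun r => y r 1) *
        rep4 (pureState ψ) (pureState ψ) y x)
      = rep4 (pureState ψ) (pureState ψ) (fun r => ![x (ps i r) 0, x (ps j r) 1]) x :=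
    fun x => collapse (ps i) (ps j) x (fun y => rep4 (pureState ψ) (pureState ψ) y x)
  simp only [hc]
  simp only [rep4_pure]
  exact W_eq (ps i) (ps j) ψ

def vt (q : Fin 2 × Fin 2 × Fin 2 × Fin 2) : Fin 4 → Fin 2 := ![q.1, q.2.1, q.2.2.1, q.2.2.2]

lemma Vexp (k : Fin 2 → Fin 2 → ℂ) (π π' : Equiv.Perm (Fin 4)) :
    (∑ v : Fin 4 → Fin 2, ∏ r : Fin 4, k (v (π r)) (v (π' r)))
    = ∑ q : Fin 2 × Fin 2 × Fin 2 × Fin 2,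
        k (vt q (π 0)) (vt q (π' 0)) * k (vt q (π 1)) (vt q (π' 1)) *
        k (vt q (π 2)) (vt q (π' 2)) * k (vt q (π 3)) (vt q (π' 3)) := by
  rw [← Equiv.sum_comp e4.symm (fun v => ∏ r : Fin 4, k (v (π r)) (v (π' r)))]
  refine Finset.sum_congr rfl fun q _ => ?_
  rw [Fin.prod_univ_four]
  rfl

def psTab : Fin 10 → Fin 4 → Fin 4 :=
  ![![0,1,2,3],![1,0,2,3],![0,1,3,2],![1,0,3,2],![2,3,0,1],
    ![3,2,1,0],![2,1,0,3],![0,3,2,1],![3,1,2,0],![0,2,1,3]]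

lemma psEval : ∀ (i : Fin 10) (r : Fin 4), ps i r = psTab i r := by decide

set_option maxHeartbeats 3000000 in
lemma magic (k : Fin 2 → Fin 2 → ℂ) :
    (∑ i : Fin 10, ∑ j : Fin 10, cc i * cc j *
      (∑ v : Fin 4 → Fin 2, ∏ r : Fin 4, k (v (ps i r)) (v (ps j r))))
    = (36/25) * (k 0 0 + k 1 1)^4
      - (58/25) * (k 0 0 + k 1 1)^2 * (k 0 0 * k 1 1 - k 0 1 * k 1 0)
      + (236/25) * (k 0 0 * k 1 1 - k 0 1 * k 1 0)^2 := by
  simp only [Vexp]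
  simp only [psEval]
  simp only [Fin.sum_univ_succ, Fin.sum_univ_zero]
  norm_num [cc, psTab, vt]
  simp only [Fintype.sum_prod_type, Fin.sum_univ_two]
  simp only [Matrix.cons_val]
  ring

lemma BnH_val (ψ : QIdx 2 → ℂ) :
    BnH (pureState ψ) (pureState ψ) =
      (36/25) * (ψ ![0,0] * star (ψ ![0,0]) + ψ ![0,1] * star (ψ ![0,1])
          + ψ ![1,0] * star (ψ ![1,0]) + ψ ![1,1] * star (ψ ![1,1]))^4
      - (58/25) * (ψ ![0,0] * star (ψ ![0,0]) + ψ ![0,1] * star (ψ ![0,1])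
          + ψ ![1,0] * star (ψ ![1,0]) + ψ ![1,1] * star (ψ ![1,1]))^2
        * ((ψ ![0,0] * ψ ![1,1] - ψ ![0,1] * ψ ![1,0])
          * star (ψ ![0,0] * ψ ![1,1] - ψ ![0,1] * ψ ![1,0]))
      + (236/25) * ((ψ ![0,0] * ψ ![1,1] - ψ ![0,1] * ψ ![1,0])
          * star (ψ ![0,0] * ψ ![1,1] - ψ ![0,1] * ψ ![1,0]))^2 := by
  rw [BnH_pure, magic (Km ψ)]
  have h1 : Km ψ 0 0 + Km ψ 1 1
      = ψ ![0,0] * star (ψ ![0,0]) + ψ ![0,1] * star (ψ ![0,1])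
        + ψ ![1,0] * star (ψ ![1,0]) + ψ ![1,1] * star (ψ ![1,1]) := by
    simp only [Km, Fin.sum_univ_two]
    ring
  have h2 : Km ψ 0 0 * Km ψ 1 1 - Km ψ 0 1 * Km ψ 1 0
      = (ψ ![0,0] * ψ ![1,1] - ψ ![0,1] * ψ ![1,0])
          * star (ψ ![0,0] * ψ ![1,1] - ψ ![0,1] * ψ ![1,0]) := by
    simp only [Km, Fin.sum_univ_two, star_sub, star_mul']
    ring
  rw [h1, h2]

lemma AB2_val (ψ : QIdx 2 → ℂ) (h : (∑ a, ψ a * star (ψ a)) = 1) :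
    AB2 ψ = (9 - 8 * Complex.normSq (ψ ![0,0] * ψ ![1,1] - ψ ![0,1] * ψ ![1,0]))
      * (36/25 - 58/25 * Complex.normSq (ψ ![0,0] * ψ ![1,1] - ψ ![0,1] * ψ ![1,0])
        + 236/25 * Complex.normSq (ψ ![0,0] * ψ ![1,1] - ψ ![0,1] * ψ ![1,0])^2) := by
  have hN : ψ ![0,0] * star (ψ ![0,0]) + ψ ![0,1] * star (ψ ![0,1])
      + ψ ![1,0] * star (ψ ![1,0]) + ψ ![1,1] * star (ψ ![1,1]) = 1 := by
    rw [← h, sum_qidx2 (fun a => ψ a * star (ψ a))]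
  have hD : (ψ ![0,0] * ψ ![1,1] - ψ ![0,1] * ψ ![1,0])
      * star (ψ ![0,0] * ψ ![1,1] - ψ ![0,1] * ψ ![1,0])
      = (Complex.normSq (ψ ![0,0] * ψ ![1,1] - ψ ![0,1] * ψ ![1,0]) : ℂ) := by
    rw [Complex.star_def, Complex.mul_conj]
  set t : ℝ := Complex.normSq (ψ ![0,0] * ψ ![1,1] - ψ ![0,1] * ψ ![1,0]) with ht
  rw [AB2, An_pure, BnH_val, hN, hD]
  have : (9 * (1:ℂ)^2 - 8 * (t:ℂ)) * ((36/25) * (1:ℂ)^4 - (58/25) * (1:ℂ)^2 * (t:ℂ)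
      + (236/25) * (t:ℂ)^2)
      = (((9 - 8 * t) * (36/25 - 58/25 * t + 236/25 * t^2) : ℝ) : ℂ) := by
    push_cast
    ring
  rw [this, Complex.ofReal_re]

lemma vec2_eta (s : QIdx 2) : ![s 0, s 1] = s := by
  funext ℓ; fin_cases ℓ <;> rfl

lemma t_le_quarter (ψ : QIdx 2 → ℂ) (h : (∑ a, ψ a * star (ψ a)) = 1) :
    Complex.normSq (ψ ![0,0] * ψ ![1,1] - ψ ![0,1] * ψ ![1,0]) ≤ 1/4 := by
  have hN : ψ ![0,0] * star (ψ ![0,0]) + ψ ![0,1] * star (ψ ![0,1])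
      + ψ ![1,0] * star (ψ ![1,0]) + ψ ![1,1] * star (ψ ![1,1]) = 1 := by
    rw [← h, sum_qidx2 (fun a => ψ a * star (ψ a))]
  have hre : Complex.normSq (ψ ![0,0]) + Complex.normSq (ψ ![0,1])
      + Complex.normSq (ψ ![1,0]) + Complex.normSq (ψ ![1,1]) = 1 := by
    have := congrArg Complex.re hN
    simpa [Complex.star_def, Complex.mul_conj, ← Complex.ofReal_add] using this
  set Aa := ‖ψ ![0,0]‖
  set Ab := ‖ψ ![0,1]‖
  set Ac := ‖ψ ![1,0]‖
  set Ad := ‖ψ ![1,1]‖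
  have hsum : Aa^2 + Ab^2 + Ac^2 + Ad^2 = 1 := by
    simp only [Aa, Ab, Ac, Ad, Complex.sq_norm]
    exact hre
  have htri : ‖ψ ![0,0] * ψ ![1,1] - ψ ![0,1] * ψ ![1,0]‖
      ≤ Aa * Ad + Ab * Ac := by
    calc ‖ψ ![0,0] * ψ ![1,1] - ψ ![0,1] * ψ ![1,0]‖
        ≤ ‖ψ ![0,0] * ψ ![1,1]‖ + ‖ψ ![0,1] * ψ ![1,0]‖ :=
          norm_sub_le _ _
      _ = Aa * Ad + Ab * Ac := by
          rw [norm_mul, norm_mul]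
  rw [← Complex.sq_norm]
  have h0 : (0:ℝ) ≤ ‖ψ ![0,0] * ψ ![1,1] - ψ ![0,1] * ψ ![1,0]‖ :=
    norm_nonneg _
  have h1 : ‖ψ ![0,0] * ψ ![1,1] - ψ ![0,1] * ψ ![1,0]‖ ^ 2
      ≤ (Aa * Ad + Ab * Ac)^2 := by
    apply pow_le_pow_left₀ h0 htri
  have h2 : (Aa * Ad + Ab * Ac)^2 ≤ 1/4 := by
    nlinarith [sq_nonneg (Aa - Ad), sq_nonneg (Ab - Ac), sq_nonneg (Aa*Ad - Ab*Ac),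
      mul_nonneg (mul_nonneg (norm_nonneg (ψ ![0,0]))
        (norm_nonneg (ψ ![1,1])))
        (mul_nonneg (norm_nonneg (ψ ![0,1]))
        (norm_nonneg (ψ ![1,0]))),
      sq_nonneg (Aa*Ad + Ab*Ac), sq_nonneg (Aa^2 + Ad^2 - Ab^2 - Ac^2)]
  linarith

lemma f_le (t : ℝ) (h0 : 0 ≤ t) (h4 : t ≤ 1/4) :
    (9 - 8*t) * (36/25 - 58/25 * t + 236/25 * t^2) ≤ 324/25 := by
  nlinarith [mul_nonneg h0 h0, mul_nonneg (mul_nonneg h0 h0) h0,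
    mul_nonneg h0 (sub_nonneg.2 h4)]

lemma f_eq_iff (t : ℝ) (h0 : 0 ≤ t) (h4 : t ≤ 1/4) :
    (9 - 8*t) * (36/25 - 58/25 * t + 236/25 * t^2) = 324/25 ↔ t = 0 := by
  constructor
  · intro hEq
    by_contra hne
    have hpos : 0 < t := lt_of_le_of_ne h0 (Ne.symm hne)
    have hbr : 163 ≤ 810 - 2588*t + 1888*t^2 := by nlinarith [sq_nonneg t]
    nlinarith [mul_pos hpos (lt_of_lt_of_le (by norm_num : (0:ℝ) < 163) hbr)]
  · intro hEq; rw [hEq]; norm_num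

lemma bell_entries :
    bellVec ![0,0] = 1 / (Real.sqrt 2 : ℂ) ∧ bellVec ![0,1] = 0 ∧
    bellVec ![1,0] = 0 ∧ bellVec ![1,1] = 1 / (Real.sqrt 2 : ℂ) := by
  refine ⟨?_, ?_, ?_, ?_⟩ <;> simp [bellVec]

lemma sqrt2_sq : ((Real.sqrt 2 : ℝ) : ℂ) * ((Real.sqrt 2 : ℝ) : ℂ) = 2 := by
  rw [← Complex.ofReal_mul, Real.mul_self_sqrt (by norm_num)]
  norm_num

lemma bell_norm : (∑ a, bellVec a * star (bellVec a)) = 1 := by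
  obtain ⟨h1, h2, h3, h4⟩ := bell_entries
  rw [sum_qidx2 (fun a => bellVec a * star (bellVec a)), h1, h2, h3, h4]
  have hs2 : ((Real.sqrt 2 : ℝ) : ℂ) ≠ 0 := by
    simp only [ne_eq, Complex.ofReal_eq_zero]
    positivity
  have hst : star (1 / ((Real.sqrt 2 : ℝ) : ℂ)) = 1 / ((Real.sqrt 2 : ℝ) : ℂ) := by
    rw [Complex.star_def, map_div₀, RingHom.map_one, Complex.conj_ofReal]
  rw [hst]
  field_simp
  rw [sq, sqrt2_sq]
  norm_num

lemma bell_value : AB2 bellVec = 203/20 := by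
  obtain ⟨h1, h2, h3, h4⟩ := bell_entries
  rw [AB2_val bellVec bell_norm, h1, h2, h3, h4]
  have hs2 : ((Real.sqrt 2 : ℝ) : ℂ) ≠ 0 := by
    simp only [ne_eq, Complex.ofReal_eq_zero]
    positivity
  have hD : 1 / ((Real.sqrt 2 : ℝ) : ℂ) * (1 / ((Real.sqrt 2 : ℝ) : ℂ)) - 0 * 0
      = (((1:ℝ)/2 : ℝ) : ℂ) := by
    field_simp
    rw [sq ((Real.sqrt 2 : ℝ) : ℂ), sqrt2_sq]
    norm_num
  rw [hD, Complex.normSq_ofReal]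
  norm_num

def psi0 : QIdx 2 → ℂ := fun s => if s 0 = 0 ∧ s 1 = 0 then 1 else 0

lemma psi0_norm : (∑ a, psi0 a * star (psi0 a)) = 1 := by
  rw [sum_qidx2 (fun a => psi0 a * star (psi0 a))]
  norm_num [psi0]

lemma psi0_value : AB2 psi0 = (18/5 : ℝ)^2 := by
  rw [AB2_val psi0 psi0_norm]
  have : psi0 ![0,0] * psi0 ![1,1] - psi0 ![0,1] * psi0 ![1,0] = 0 := by
    norm_num [psi0]
  rw [this]
  norm_num

lemma upper (ψ : QIdx 2 → ℂ) (h : (∑ a, ψ a * star (ψ a)) = 1) :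
    AB2 ψ ≤ (18/5 : ℝ)^2 := by
  rw [AB2_val ψ h]
  have := f_le (Complex.normSq (ψ ![0,0] * ψ ![1,1] - ψ ![0,1] * ψ ![1,0]))
    (Complex.normSq_nonneg _) (t_le_quarter ψ h)
  linarith

lemma eq_iff_product (ψ : QIdx 2 → ℂ) (h : (∑ a, ψ a * star (ψ a)) = 1) :
    AB2 ψ = 324/25 ↔ ∃ ψ₁ ψ₂ : Fin 2 → ℂ, ∀ s, ψ s = ψ₁ (s 0) * ψ₂ (s 1) := by
  rw [AB2_val ψ h]
  rw [f_eq_iff _ (Complex.normSq_nonneg _) (t_le_quarter ψ h)]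
  rw [Complex.normSq_eq_zero, sub_eq_zero]
  constructor
  · intro had
    by_cases ha : ψ ![0,0] = 0
    · have hbc : ψ ![0,1] * ψ ![1,0] = 0 := by rw [← had, ha, zero_mul]
      rcases mul_eq_zero.mp hbc with hb | hc
      · refine ⟨![0, 1], ![ψ ![1,0], ψ ![1,1]], fun s => ?_⟩
        have hs : ψ s = ψ ![s 0, s 1] := by rw [vec2_eta]
        have h0 : s 0 = 0 ∨ s 0 = 1 := by omega
        have h1 : s 1 = 0 ∨ s 1 = 1 := by omega
        rcases h0 with h0 | h0 <;> rcases h1 with h1 | h1 <;>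
          rw [hs, h0, h1] <;> simp [ha, hb]
      · refine ⟨![ψ ![0,1], ψ ![1,1]], ![0, 1], fun s => ?_⟩
        have hs : ψ s = ψ ![s 0, s 1] := by rw [vec2_eta]
        have h0 : s 0 = 0 ∨ s 0 = 1 := by omega
        have h1 : s 1 = 0 ∨ s 1 = 1 := by omega
        rcases h0 with h0 | h0 <;> rcases h1 with h1 | h1 <;>
          rw [hs, h0, h1] <;> simp [ha, hc]
    · refine ⟨![ψ ![0,0], ψ ![1,0]], ![1, ψ ![0,1] / ψ ![0,0]], fun s => ?_⟩
      have hs : ψ s = ψ ![s 0, s 1] := by rw [vec2_eta]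
      have h0 : s 0 = 0 ∨ s 0 = 1 := by omega
      have h1 : s 1 = 0 ∨ s 1 = 1 := by omega
      rcases h0 with h0 | h0 <;> rcases h1 with h1 | h1
      · rw [hs, h0, h1]; simp
      · rw [hs, h0, h1]; simp; field_simp
      · rw [hs, h0, h1]; simp
      · rw [hs, h0, h1]; simp; field_simp; linear_combination had
  · rintro ⟨ψ₁, ψ₂, hprod⟩
    have e00 := hprod ![0,0]
    have e01 := hprod ![0,1]
    have e10 := hprod ![1,0]
    have e11 := hprod ![1,1]
    simp only [Matrix.cons_val_zero, Matrix.cons_val_one, Matrix.head_cons] at e00 e01 e10 e11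
    rw [e00, e01, e10, e11]
    ring

end Cert

theorem two_qubit_certificate_max :
    IsGreatest {x : ℝ | ∃ ψ : QIdx 2 → ℂ, (∑ a, ψ a * star (ψ a)) = 1 ∧ x = AB2 ψ}
      ((18/5 : ℝ)^2) ∧
    ((18/5 : ℝ)^2 = 324/25) ∧
    (∀ ψ : QIdx 2 → ℂ, (∑ a, ψ a * star (ψ a)) = 1 →
      (AB2 ψ = 324/25 ↔ ∃ ψ₁ ψ₂ : Fin 2 → ℂ, ∀ s, ψ s = ψ₁ (s 0) * ψ₂ (s 1))) ∧
    AB2 bellVec = 203/20 ∧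
    (203/20 : ℝ) < 324/25 := by
  refine ⟨⟨⟨Cert.psi0, Cert.psi0_norm, Cert.psi0_value.symm⟩, ?_⟩, by norm_num, ?_, Cert.bell_value, by norm_num⟩
  · rintro x ⟨ψ, hψ, rfl⟩
    exact Cert.upper ψ hψ
  · intro ψ hψ
    exact Cert.eq_iff_product ψ hψ
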